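/- Let p > 1, t ∈ [0,1], let U, V be positive real numbers, and let A, B ∈ ℝ^N. Set Q = (t U^p + (1−t) V^p)^{1/p}. Then ‖Q^{1−p} ( t U^{p−1} A + (1−t) V^{p−1} B )‖^p ≤ t ‖A‖^p + (1−t) ‖B‖^p, where ‖·‖ is the Euclidean norm on ℝ^N. -/

import Mathlib

open Real

/-- **hidden convexity, pointwise form.** For `p > 1`, `t ∈ [0,1]`,
`U, V > 0`, `A, B ∈ ℝ^N` and `Q = (tU^p + (1−t)V^p)^{1/p}`, one has
`‖Q^{1−p}(tU^{p−1}A + (1−t)V^{p−1}B)‖^p ≤ t‖A‖^p + (1−t)‖B‖^p`. -/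
theorem hidden_convexity_gradient (N : ℕ) (hN : 1 ≤ N) (p : ℝ) (hp : 1 < p)
    (t : ℝ) (ht : t ∈ Set.Icc (0 : ℝ) 1) (U V : ℝ) (hU : 0 < U) (hV : 0 < V)
    (A B : EuclideanSpace ℝ (Fin N)) (Q : ℝ)
    (hQ : Q = (t * U ^ p + (1 - t) * V ^ p) ^ (1 / p)) :
    ‖Q ^ (1 - p) • ((t * U ^ (p - 1)) • A + ((1 - t) * V ^ (p - 1)) • B)‖ ^ p ≤
      t * ‖A‖ ^ p + (1 - t) * ‖B‖ ^ p := by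
  obtain ⟨ht0, ht1⟩ := ht
  have ht1' : (0:ℝ) ≤ 1 - t := by linarith
  have hp0 : (0:ℝ) < p := lt_trans one_pos hp
  have hUp : 0 < U ^ p := Real.rpow_pos_of_pos hU p
  have hVp : 0 < V ^ p := Real.rpow_pos_of_pos hV p
  set s : ℝ := t * U ^ p + (1 - t) * V ^ p with hs
  have hs0 : 0 < s := by
    rcases eq_or_lt_of_le ht0 with h | h
    · have : s = V ^ p := by rw [hs, ← h]; ring
      rw [this]; exact hVp
    · have h1 : 0 < t * U ^ p := mul_pos h hUp
      have h2 : 0 ≤ (1 - t) * V ^ p := mul_nonneg ht1' hVp.le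
      linarith
  have hQ0 : 0 < Q := by rw [hQ]; exact Real.rpow_pos_of_pos hs0 _
  set a := ‖A‖ with ha
  set b := ‖B‖ with hb
  have ha0 : 0 ≤ a := norm_nonneg _
  have hb0 : 0 ≤ b := norm_nonneg _
  set lam : ℝ := t * U ^ p / s with hlam
  set mu : ℝ := (1 - t) * V ^ p / s with hmu
  have hlam0 : 0 ≤ lam := div_nonneg (mul_nonneg ht0 hUp.le) hs0.le
  have hmu0 : 0 ≤ mu := div_nonneg (mul_nonneg ht1' hVp.le) hs0.le
  have hsum : lam + mu = 1 := by
    rw [hlam, hmu]; field_simp; exact hs.symm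
  set D : ℝ := lam * (a / U) + mu * (b / V) with hD
  have hD0 : 0 ≤ D :=
    add_nonneg (mul_nonneg hlam0 (div_nonneg ha0 hU.le))
      (mul_nonneg hmu0 (div_nonneg hb0 hV.le))
  -- convexity of x ↦ x ^ p
  have hconv := (convexOn_rpow hp.le).2 (Set.mem_Ici.2 (div_nonneg ha0 hU.le))
      (Set.mem_Ici.2 (div_nonneg hb0 hV.le)) hlam0 hmu0 hsum
  simp only [smul_eq_mul] at hconv
  -- key scalar inequality
  have key : (Q ^ (1 - p) * (t * U ^ (p - 1) * a + (1 - t) * V ^ (p - 1) * b)) ^ p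
      ≤ t * a ^ p + (1 - t) * b ^ p := by
    have hX : t * U ^ (p - 1) * a + (1 - t) * V ^ (p - 1) * b = s * D := by
      rw [hD, hlam, hmu, Real.rpow_sub hU, Real.rpow_sub hV, Real.rpow_one, Real.rpow_one]
      field_simp
    have hQ1p : Q ^ (1 - p) * s = s ^ (1 / p) := by
      rw [hQ, ← Real.rpow_mul hs0.le, ← Real.rpow_add_one hs0.ne']
      congr 1
      field_simp
      ring
    rw [hX, ← mul_assoc, hQ1p, Real.mul_rpow (Real.rpow_nonneg hs0.le _) hD0,
      ← Real.rpow_mul hs0.le, one_div, inv_mul_cancel₀ hp0.ne', Real.rpow_one]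
    calc s * D ^ p ≤ s * (lam * (a / U) ^ p + mu * (b / V) ^ p) :=
          mul_le_mul_of_nonneg_left hconv hs0.le
      _ = t * a ^ p + (1 - t) * b ^ p := by
          rw [hlam, hmu, Real.div_rpow ha0 hU.le, Real.div_rpow hb0 hV.le]
          field_simp
  calc ‖Q ^ (1 - p) • ((t * U ^ (p - 1)) • A + ((1 - t) * V ^ (p - 1)) • B)‖ ^ p
      ≤ (Q ^ (1 - p) * (t * U ^ (p - 1) * a + (1 - t) * V ^ (p - 1) * b)) ^ p := by
        apply Real.rpow_le_rpow (norm_nonneg _) _ hp0.le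
        rw [norm_smul, Real.norm_eq_abs, abs_of_pos (Real.rpow_pos_of_pos hQ0 _)]
        have h1 : ‖(t * U ^ (p - 1)) • A + ((1 - t) * V ^ (p - 1)) • B‖
            ≤ t * U ^ (p - 1) * a + (1 - t) * V ^ (p - 1) * b := by
          refine (norm_add_le _ _).trans ?_
          rw [norm_smul, norm_smul, Real.norm_eq_abs, Real.norm_eq_abs,
            abs_of_nonneg (mul_nonneg ht0 (Real.rpow_pos_of_pos hU _).le),
            abs_of_nonneg (mul_nonneg ht1' (Real.rpow_pos_of_pos hV _).le)]
        exact mul_le_mul_of_nonneg_left h1 (Real.rpow_pos_of_pos hQ0 _).le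
    _ ≤ _ := key
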